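/- Suppose S ⊆ ℝⁿ is compact and given by S = {x ∈ X : x_{I_r} ∈ S^r for r = 1,…,l} with each S^r compact. Suppose for each r a sequence of compact outer approximations S^r_k ⊇ S^r satisfies Hausdorff-distance convergence dist(S^r_k, S^r) → 0 as k → ∞, and the sets S^r_k are uniformly bounded. Define S'_k = {x ∈ X : x_{I_r} ∈ S^r_k for r = 1,…,l}. Then dist(S'_k, S) → 0 as k → ∞. -/
import Mathlib


/-- if compact outer approximations `Sʳ_k ⊇ Sʳ` converge in Hausdorff
distance and are uniformly bounded, then the glued sets
`S'_k = {x ∈ X : x_{I r} ∈ Sʳ_k ∀r}` converge in Hausdorff distance to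
`S = {x ∈ X : x_{I r} ∈ Sʳ ∀r}`. -/
theorem glued_hausdorff_convergence (n l : ℕ) (X : Set (Fin n → ℝ)) (hX : IsCompact X)
    (I : Fin l → Finset (Fin n))
    (Sr : ∀ r : Fin l, Set ({i // i ∈ I r} → ℝ)) (hSrc : ∀ r, IsCompact (Sr r))
    (Srk : ∀ r : Fin l, ℕ → Set ({i // i ∈ I r} → ℝ))
    (hSrkc : ∀ r k, IsCompact (Srk r k))
    (houter : ∀ r k, Sr r ⊆ Srk r k)
    (hbdd : ∀ r, ∃ C : ℝ, ∀ k, Srk r k ⊆ Metric.closedBall 0 C)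
    (hconv : ∀ r, Filter.Tendsto (fun k => Metric.hausdorffDist (Srk r k) (Sr r))
        Filter.atTop (nhds 0))
    (S : Set (Fin n → ℝ)) (hSc : IsCompact S)
    (hS : S = {x ∈ X | ∀ r : Fin l, (fun i : {i // i ∈ I r} => x i.1) ∈ Sr r}) :
    Filter.Tendsto (fun k => Metric.hausdorffDist
        {x ∈ X | ∀ r : Fin l, (fun i : {i // i ∈ I r} => x i.1) ∈ Srk r k} S)
      Filter.atTop (nhds 0) := by
  by_cases hne : S.Nonempty
  · have hproj : ∀ r : Fin l,
        Continuous (fun x : Fin n → ℝ => (fun i : {i // i ∈ I r} => x i.1)) :=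
      fun r => continuous_pi (fun i => continuous_apply i.1)
    have hSrne : ∀ r, (Sr r).Nonempty := by
      obtain ⟨x, hx⟩ := hne
      rw [hS] at hx
      exact fun r => ⟨_, hx.2 r⟩
    have hSrkne : ∀ r k, (Srk r k).Nonempty := fun r k => (hSrne r).mono (houter r k)
    have hedist : ∀ r k, EMetric.hausdorffEdist (Srk r k) (Sr r) ≠ ⊤ := fun r k =>
      Metric.hausdorffEdist_ne_top_of_nonempty_of_bounded (hSrkne r k) (hSrne r)
        (hSrkc r k).isBounded (hSrc r).isBounded
    set f : (Fin n → ℝ) → ℝ := fun x => Metric.infDist x S with hf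
    set g : (Fin n → ℝ) → ℝ :=
      fun x => ∑ r : Fin l, Metric.infDist (fun i : {i // i ∈ I r} => x i.1) (Sr r) with hg
    have hgc : Continuous g :=
      continuous_finset_sum _ (fun r _ => (Metric.continuous_infDist_pt (Sr r)).comp (hproj r))
    have hfc : Continuous f := Metric.continuous_infDist_pt S
    rw [Metric.tendsto_nhds]
    intro ε hε
    have hε2 : 0 < ε / 2 := half_pos hε
    -- the bad set
    set K : Set (Fin n → ℝ) := X ∩ {x | ε / 2 ≤ f x} with hK
    have hKc : IsCompact K := hX.inter_right (isClosed_le continuous_const hfc)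
    have hgposK : ∀ x ∈ K, 0 < g x := by
      intro x hx
      have hxS : x ∉ S := by
        intro hxS
        have h0 : f x = 0 := Metric.infDist_zero_of_mem hxS
        have h1 : ε / 2 ≤ f x := hx.2
        linarith
      have hxX : x ∈ X := hx.1
      have : ∃ r : Fin l, (fun i : {i // i ∈ I r} => x i.1) ∉ Sr r := by
        by_contra h
        push_neg at h
        exact hxS (hS ▸ ⟨hxX, h⟩)
      obtain ⟨r, hr⟩ := this
      have hpos : 0 < Metric.infDist (fun i : {i // i ∈ I r} => x i.1) (Sr r) :=
        ((hSrc r).isClosed.notMem_iff_infDist_pos (hSrne r)).1 hr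
      exact Finset.sum_pos' (fun i _ => Metric.infDist_nonneg) ⟨r, Finset.mem_univ r, hpos⟩
    obtain ⟨δ, hδ, hδspec⟩ : ∃ δ > 0, ∀ x ∈ X, g x < δ → f x < ε / 2 := by
      rcases Set.eq_empty_or_nonempty K with hKe | hKne
      · refine ⟨1, one_pos, fun x hx _ => ?_⟩
        by_contra h
        push_neg at h
        exact Set.notMem_empty x (hKe ▸ (⟨hx, h⟩ : x ∈ K))
      · obtain ⟨x₀, hx₀K, hx₀min⟩ := hKc.exists_isMinOn hKne hgc.continuousOn
        refine ⟨g x₀, hgposK x₀ hx₀K, fun x hx hgx => ?_⟩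
        by_contra h
        push_neg at h
        exact absurd (hx₀min (⟨hx, h⟩ : x ∈ K)) (not_le.2 hgx)
    have hl1 : (0 : ℝ) < (l : ℝ) + 1 := by positivity
    have hδ' : 0 < δ / ((l : ℝ) + 1) := by positivity
    have hev : ∀ᶠ k in Filter.atTop,
        ∀ r : Fin l, Metric.hausdorffDist (Srk r k) (Sr r) < δ / ((l : ℝ) + 1) :=
      Filter.eventually_all.2 fun r => (hconv r).eventually (Iio_mem_nhds hδ')
    filter_upwards [hev] with k hk
    have hSsub : S ⊆ {x ∈ X | ∀ r : Fin l, (fun i : {i // i ∈ I r} => x i.1) ∈ Srk r k} := by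
      intro x hx
      rw [hS] at hx
      exact ⟨hx.1, fun r => houter r k (hx.2 r)⟩
    have hle : Metric.hausdorffDist
        {x ∈ X | ∀ r : Fin l, (fun i : {i // i ∈ I r} => x i.1) ∈ Srk r k} S ≤ ε / 2 := by
      apply Metric.hausdorffDist_le_of_infDist hε2.le
      · intro x hx
        have hgx : g x < δ := by
          have h1 : g x ≤ ∑ _r : Fin l, δ / ((l : ℝ) + 1) := by
            apply Finset.sum_le_sum
            intro r _
            exact le_trans
              (Metric.infDist_le_hausdorffDist_of_mem (hx.2 r) (hedist r k)) (hk r).le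
          have h2 : ∑ _r : Fin l, δ / ((l : ℝ) + 1) = (l : ℝ) * (δ / ((l : ℝ) + 1)) := by
            simp [Finset.sum_const, Finset.card_univ]
          have h3 : (l : ℝ) * (δ / ((l : ℝ) + 1)) < δ := by
            rw [mul_div_assoc']
            rw [div_lt_iff₀ hl1]
            nlinarith
          linarith [h1, h2 ▸ h1]
        exact (hδspec x hx.1 hgx).le
      · intro x hx
        have : Metric.infDist x
            {x ∈ X | ∀ r : Fin l, (fun i : {i // i ∈ I r} => x i.1) ∈ Srk r k} = 0 :=
          Metric.infDist_zero_of_mem (hSsub hx)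
        rw [this]; exact hε2.le
    have hnn : 0 ≤ Metric.hausdorffDist
        {x ∈ X | ∀ r : Fin l, (fun i : {i // i ∈ I r} => x i.1) ∈ Srk r k} S :=
      Metric.hausdorffDist_nonneg
    rw [Real.dist_eq, sub_zero, abs_of_nonneg hnn]
    linarith
  · rw [Set.not_nonempty_iff_eq_empty] at hne
    subst hne
    simp only [Metric.hausdorffDist_empty]
    exact tendsto_const_nhds
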